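/- Let k be a field of characteristic zero and L a Lie algebra over k. Then the set of primitive elements of the universal enveloping algebra U(L) (i.e., elements a with Δ(a) = a⊗1 + 1⊗a) is exactly the image of L under the canonical embedding L → U(L). -/

import Mathlib

open TensorProduct
open scoped Pointwise

namespace UEAux

variable {k : Type*} [CommRing k] {A : Type*} [Ring A] [Bialgebra k A]

noncomputable def cv (f g : A →ₗ[k] A) : A →ₗ[k] A :=
  (LinearMap.mul' k A) ∘ₗ (TensorProduct.map f g) ∘ₗ (Coalgebra.comul (R := k))

noncomputable def rr (k : Type*) [CommRing k] (A : Type*) [Ring A] [Bialgebra k A] :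
    A →ₗ[k] A :=
  LinearMap.id - (Algebra.linearMap k A) ∘ₗ (Coalgebra.counit (R := k))

noncomputable def G (k : Type*) [CommRing k] {A : Type*} [Ring A] [Bialgebra k A] :
    List (List A) → (A →ₗ[k] A)
  | [] => (Algebra.linearMap k A) ∘ₗ (Coalgebra.counit (R := k))
  | b :: c => cv (rr k A ∘ₗ LinearMap.mulLeft k b.prod) (G k c)

def ins {A : Type*} (y : A) : List (List A) → List (List (List A))
  | [] => []
  | b :: c => ((b ++ [y]) :: c) :: (ins y c).map (b :: ·)

def ce {A : Type*} (c : List (List A)) : ℕ := c.countP (·.isEmpty)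

noncomputable def Fil (k : Type*) [CommRing k] {A : Type*} [Ring A] [Algebra k A]
    (S : Set A) (n : ℕ) : Submodule k A :=
  (1 ⊔ Submodule.span k S) ^ n

lemma rr_apply (z : A) :
    rr k A z = z - Coalgebra.counit (R := k) z • 1 := by
  simp [rr, Algebra.algebraMap_eq_smul_one]

lemma rr_one : rr k A 1 = 0 := by
  simp [rr_apply]

lemma rr_of_counit_eq_zero {z : A} (h : Coalgebra.counit (R := k) z = 0) :
    rr k A z = z := by
  simp [rr_apply, h]

lemma cv_one (f g : A →ₗ[k] A) : cv f g 1 = f 1 * g 1 := by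
  simp [cv, Algebra.TensorProduct.one_def]

lemma cv_prim (f g : A →ₗ[k] A) {a : A}
    (ha : Coalgebra.comul (R := k) a = a ⊗ₜ[k] 1 + 1 ⊗ₜ[k] a) :
    cv f g a = f a * g 1 + f 1 * g a := by
  simp [cv, ha]

lemma cv_zero_right (f : A →ₗ[k] A) : cv f (0 : A →ₗ[k] A) = 0 := by
  ext a
  simp only [cv, LinearMap.comp_apply, LinearMap.zero_apply]
  induction (Coalgebra.comul (R := k) a) using TensorProduct.induction_on with
  | zero => simp
  | tmul x y => simp
  | add x y hx hy => simp [map_add, hx, hy]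

lemma cv_add_right (f g₁ g₂ : A →ₗ[k] A) : cv f (g₁ + g₂) = cv f g₁ + cv f g₂ := by
  ext a
  simp only [cv, LinearMap.comp_apply, LinearMap.add_apply]
  induction (Coalgebra.comul (R := k) a) using TensorProduct.induction_on with
  | zero => simp
  | tmul x y => simp [mul_add]
  | add x y hx hy =>
      simp only [map_add] at hx hy ⊢
      rw [hx, hy]; abel

lemma cv_list_sum_right (f : A →ₗ[k] A) (l : List (A →ₗ[k] A)) :
    cv f l.sum = (l.map (cv f)).sum := by
  induction l with
  | nil => simpa using cv_zero_right f
  | cons g t ih => simp [List.sum_cons, cv_add_right, ih]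

lemma cv_mulLeft (f g : A →ₗ[k] A) {y : A}
    (hy : Coalgebra.comul (R := k) y = y ⊗ₜ[k] 1 + 1 ⊗ₜ[k] y) (w : A) :
    cv f g (y * w) =
      cv (f ∘ₗ LinearMap.mulLeft k y) g w + cv f (g ∘ₗ LinearMap.mulLeft k y) w := by
  have key : ∀ t : A ⊗[k] A,
      (LinearMap.mul' k A) (TensorProduct.map f g ((y ⊗ₜ[k] 1) * t)) =
        (LinearMap.mul' k A) (TensorProduct.map (f ∘ₗ LinearMap.mulLeft k y) g t) := by
    intro t
    induction t using TensorProduct.induction_on with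
    | zero => simp
    | tmul a b => simp [Algebra.TensorProduct.tmul_mul_tmul]
    | add x y hx hy => simp only [mul_add, map_add, hx, hy]
  have key2 : ∀ t : A ⊗[k] A,
      (LinearMap.mul' k A) (TensorProduct.map f g ((1 ⊗ₜ[k] y) * t)) =
        (LinearMap.mul' k A) (TensorProduct.map f (g ∘ₗ LinearMap.mulLeft k y) t) := by
    intro t
    induction t using TensorProduct.induction_on with
    | zero => simp
    | tmul a b => simp [Algebra.TensorProduct.tmul_mul_tmul]
    | add x y hx hy => simp only [mul_add, map_add, hx, hy]
  simp only [cv, LinearMap.comp_apply, Bialgebra.comul_mul, hy, add_mul]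
  rw [map_add, map_add, key, key2]

set_option linter.unusedSectionVars false


-- G at 1
lemma G_one (c : List (List A)) :
    G k c 1 = (c.map (fun b => rr k A b.prod)).prod := by
  induction c with
  | nil => simp [G]
  | cons b c ih =>
      show cv (rr k A ∘ₗ LinearMap.mulLeft k b.prod) (G k c) 1 = _
      rw [show cv (rr k A ∘ₗ LinearMap.mulLeft k b.prod) (G k c) 1
            = (rr k A ∘ₗ LinearMap.mulLeft k b.prod) 1 * G k c 1 from by
          simp [cv, Algebra.TensorProduct.one_def]]
      simp [ih]

-- counit of nonempty products of counit-zero elements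
lemma counit_prod_eq_zero {l : List A} (hne : l ≠ [])
    (h : ∀ z ∈ l, Coalgebra.counit (R := k) z = 0) :
    Coalgebra.counit (R := k) l.prod = 0 := by
  cases l with
  | nil => exact absurd rfl hne
  | cons z t =>
      rw [List.prod_cons, Bialgebra.counit_mul, h z (by simp)]
      simp

-- ce lemmas
lemma ce_cons (b : List A) (c : List (List A)) :
    ce (b :: c) = ce c + (if b.isEmpty then 1 else 0) := by
  simp [ce, List.countP_cons]

lemma ce_append_singleton_cons (b : List A) (y : A) (c : List (List A)) :
    ce ((b ++ [y]) :: c) = ce c := by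
  rw [ce_cons]
  simp

lemma ce_le_ins {y : A} : ∀ {c c' : List (List A)}, c' ∈ ins y c → ce c ≤ ce c' + 1 := by
  intro c
  induction c with
  | nil => intro c' h; simp [ins] at h
  | cons b t ih =>
      intro c' h
      rcases List.mem_cons.1 h with h | h
      · subst h
        rw [ce_cons, ce_append_singleton_cons]
        split <;> omega
      · simp only [List.mem_map] at h
        obtain ⟨t', ht', rfl⟩ := h
        have := ih ht'
        rw [ce_cons, ce_cons]
        omega

lemma flatten_ins_perm {y : A} :
    ∀ {c c' : List (List A)}, c' ∈ ins y c → c'.flatten.Perm (c.flatten ++ [y]) := by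
  intro c
  induction c with
  | nil => intro c' h; simp [ins] at h
  | cons b t ih =>
      intro c' h
      rcases List.mem_cons.1 h with h | h
      · subst h
        simp only [List.flatten_cons, List.append_assoc]
        exact (List.Perm.append_left b (List.perm_append_comm (l₁ := [y]) (l₂ := t.flatten)))
      · simp only [List.mem_map] at h
        obtain ⟨t', ht', rfl⟩ := h
        simp only [List.flatten_cons, List.append_assoc]
        exact List.Perm.append_left b (ih ht')

lemma mem_of_mem_ins {y : A} {c c' : List (List A)} (h : c' ∈ ins y c)
    {z : A} {b' : List A} (hb : b' ∈ c') (hz : z ∈ b') :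
    z ∈ c.flatten ++ [y] :=
  (flatten_ins_perm h).mem_iff.mp (List.mem_flatten.mpr ⟨b', hb, hz⟩)

-- sum of linear maps applied
lemma list_sum_apply (l : List (A →ₗ[k] A)) (a : A) :
    l.sum a = (l.map (fun f => f a)).sum := by
  induction l with
  | nil => simp
  | cons f t ih => simp [List.sum_cons, ih]


lemma G_comp_mulLeft {y : A}
    (hy : Coalgebra.comul (R := k) y = y ⊗ₜ[k] 1 + 1 ⊗ₜ[k] y)
    (hey : Coalgebra.counit (R := k) y = 0) :
    ∀ c : List (List A), G k c ∘ₗ LinearMap.mulLeft k y = ((ins y c).map (G k)).sum := by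
  intro c
  induction c with
  | nil =>
      ext a
      simp [G, ins, Bialgebra.counit_mul, hey]
  | cons b c ih =>
      ext a
      have h1 : G k (b :: c) (y * a)
          = cv ((rr k A ∘ₗ LinearMap.mulLeft k b.prod) ∘ₗ LinearMap.mulLeft k y) (G k c) a
            + cv (rr k A ∘ₗ LinearMap.mulLeft k b.prod) (G k c ∘ₗ LinearMap.mulLeft k y) a := by
        rw [show G k (b :: c) = cv (rr k A ∘ₗ LinearMap.mulLeft k b.prod) (G k c) from rfl,
          cv_mulLeft _ _ hy a]
      have h2 : (rr k A ∘ₗ LinearMap.mulLeft k b.prod) ∘ₗ LinearMap.mulLeft k y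
          = rr k A ∘ₗ LinearMap.mulLeft k (b ++ [y]).prod := by
        rw [LinearMap.comp_assoc, ← LinearMap.mulLeft_mul, List.prod_append, List.prod_singleton]
      have h3 : cv (rr k A ∘ₗ LinearMap.mulLeft k b.prod) (G k c ∘ₗ LinearMap.mulLeft k y)
          = ((ins y c).map (fun t' => G k (b :: t'))).sum := by
        rw [ih, cv_list_sum_right, List.map_map]
        rfl
      simp only [LinearMap.comp_apply, LinearMap.mulLeft_apply]
      rw [h1, h2, h3]
      simp only [ins, List.map_cons, List.sum_cons, List.map_map, LinearMap.add_apply]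
      rfl

lemma isEmpty_append_singleton (b : List A) (y : A) : (b ++ [y]).isEmpty = false := by
  cases b <;> simp

lemma sum_split {M : Submodule k A} (v : A) (y : A) :
    ∀ c : List (List A), ∀ T : List (List A) → A,
      (∀ c' ∈ ins y c,
        (ce c' = ce c → T c' = 0) ∧ (ce c' + 1 = ce c → T c' - v ∈ M)) →
      ((ins y c).map T).sum - ce c • v ∈ M := by
  intro c
  induction c with
  | nil => intro T _; simp [ins, ce]
  | cons b t ih =>
      intro T h
      have hmemhead : ((b ++ [y]) :: t) ∈ ins y (b :: t) := List.mem_cons_self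
      have hcehead : ce ((b ++ [y]) :: t) = ce t := ce_append_singleton_cons b y t
      have ihapp := ih (fun t' => T (b :: t')) (fun t' ht' => by
        have hmem : (b :: t') ∈ ins y (b :: t) :=
          List.mem_cons_of_mem _ (List.mem_map_of_mem ht')
        have h2 := h _ hmem
        constructor
        · intro hce
          exact h2.1 (by rw [ce_cons, ce_cons, hce])
        · intro hce
          exact h2.2 (by rw [ce_cons, ce_cons]; omega))
      have hsum : ((ins y (b :: t)).map T).sum
          = T ((b ++ [y]) :: t) + (((ins y t).map (fun t' => T (b :: t'))).sum) := by
        simp [ins, List.map_map]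
        rfl
      rw [hsum]
      by_cases hb : b.isEmpty
      · have hce : ce (b :: t) = ce t + 1 := by rw [ce_cons, if_pos hb]
        have hhead := (h _ hmemhead).2 (by omega)
        have : T ((b ++ [y]) :: t) + ((ins y t).map (fun t' => T (b :: t'))).sum
            - ce (b :: t) • v
            = (T ((b ++ [y]) :: t) - v)
              + (((ins y t).map (fun t' => T (b :: t'))).sum - ce t • v) := by
          rw [hce, succ_nsmul]
          abel
        rw [this]
        exact M.add_mem hhead ihapp
      · have hce : ce (b :: t) = ce t := by rw [ce_cons, if_neg hb]; omega
        have hhead := (h _ hmemhead).1 (by omega)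
        rw [hhead, zero_add, hce]
        exact ihapp

-- filtration lemmas
lemma Fil_le_succ (S : Set A) (n : ℕ) : Fil k S n ≤ Fil k S (n + 1) := by
  show (1 ⊔ Submodule.span k S) ^ n ≤ (1 ⊔ Submodule.span k S) ^ (n + 1)
  rw [pow_succ]
  calc (1 ⊔ Submodule.span k S) ^ n
      = (1 ⊔ Submodule.span k S) ^ n * 1 := by rw [Submodule.mul_one]
    _ ≤ (1 ⊔ Submodule.span k S) ^ n * (1 ⊔ Submodule.span k S) :=
        mul_le_mul_right le_sup_left _

lemma Fil_mono (S : Set A) : Monotone (Fil k S) :=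
  monotone_nat_of_le_succ (Fil_le_succ S)

lemma mul_mem_Fil {S : Set A} {m n : ℕ} {a b : A}
    (ha : a ∈ Fil k S m) (hb : b ∈ Fil k S n) : a * b ∈ Fil k S (m + n) := by
  show a * b ∈ (1 ⊔ Submodule.span k S) ^ (m + n)
  rw [pow_add]
  exact Submodule.mul_mem_mul ha hb

lemma span_le_Fil_one (S : Set A) : Submodule.span k S ≤ Fil k S 1 := by
  show Submodule.span k S ≤ (1 ⊔ Submodule.span k S) ^ 1
  rw [pow_one]
  exact le_sup_right

lemma mem_Fil_one_of_mem {S : Set A} {z : A} (hz : z ∈ S) : z ∈ Fil k S 1 :=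
  span_le_Fil_one S (Submodule.subset_span hz)

lemma one_mem_Fil (S : Set A) (n : ℕ) : (1 : A) ∈ Fil k S n := by
  induction n with
  | zero =>
      show (1 : A) ∈ (1 ⊔ Submodule.span k S) ^ 0
      rw [pow_zero]
      exact Submodule.mem_one.mpr ⟨1, map_one _⟩
  | succ n ih => exact Fil_le_succ S n ih

lemma prod_mem_Fil {S : Set A} : ∀ l : List A, (∀ z ∈ l, z ∈ S) →
    l.prod ∈ Fil k S l.length := by
  intro l
  induction l with
  | nil => intro _; simpa using one_mem_Fil S 0
  | cons x t ih =>
      intro h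
      rw [List.prod_cons, List.length_cons]
      have : x * t.prod ∈ Fil k S (1 + t.length) :=
        mul_mem_Fil (mem_Fil_one_of_mem (h x (by simp))) (ih (fun z hz => h z (by simp [hz])))
      rwa [add_comm] at this

lemma perm_prod_sub_mem {S : Set A}
    (hcomm : ∀ x ∈ S, ∀ y ∈ S, x * y - y * x ∈ Submodule.span k S)
    {l₁ l₂ : List A} (hp : l₁.Perm l₂) (hS : ∀ z ∈ l₁, z ∈ S) :
    l₁.prod - l₂.prod ∈ Fil k S (l₁.length - 1) := by
  induction hp with
  | nil => simp
  | cons x hp ih =>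
      rename_i t₁ t₂
      rcases t₁ with _ | ⟨w, t⟩
      · have ht₂ : t₂ = [] := List.length_eq_zero_iff.mp (hp.length_eq.symm)
        subst ht₂
        simp
      · have h1 : (x :: w :: t).prod - (x :: t₂).prod = x * ((w :: t).prod - t₂.prod) := by
          rw [List.prod_cons, List.prod_cons, mul_sub, List.prod_cons]
        rw [h1]
        have h2 := ih (fun z hz => hS z (by simp at hz ⊢; tauto))
        have h3 : x * ((w :: t).prod - t₂.prod) ∈ Fil k S (1 + ((w :: t).length - 1)) :=
          mul_mem_Fil (mem_Fil_one_of_mem (hS x (by simp))) h2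
        have h4 : 1 + ((w :: t).length - 1) = (x :: w :: t).length - 1 := by
          simp [add_comm]
        rwa [h4] at h3
  | swap x y t =>
      have hx : x ∈ S := hS x (by simp)
      have hy : y ∈ S := hS y (by simp)
      have h1 : (y :: x :: t).prod - (x :: y :: t).prod = (y * x - x * y) * t.prod := by
        simp only [List.prod_cons, ← mul_assoc, sub_mul]
      rw [h1]
      have h2 : (y * x - x * y) ∈ Fil k S 1 := span_le_Fil_one S (hcomm y hy x hx)
      have h3 := mul_mem_Fil h2 (prod_mem_Fil t (fun z hz => hS z (by simp [hz])))
      have h4 : 1 + t.length = (y :: x :: t).length - 1 := by simp [add_comm]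
      rwa [h4] at h3
  | trans hp₁ hp₂ ih₁ ih₂ =>
      rename_i l₂' l₃'
      have hS₂ : ∀ z ∈ l₂', z ∈ S := fun z hz => hS z (hp₁.mem_iff.mpr hz)
      have e1 := ih₁ hS
      have e2 := ih₂ hS₂
      rw [← hp₁.length_eq] at e2
      have := Submodule.add_mem _ e1 e2
      rwa [sub_add_sub_cancel] at this

lemma ce_replicate (n : ℕ) : ce (List.replicate n ([] : List A)) = n := by
  induction n with
  | zero => simp [ce]
  | succ n ih => rw [List.replicate_succ, ce_cons, ih]; simp

lemma flatten_replicate_nil (n : ℕ) :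
    (List.replicate n ([] : List A)).flatten = [] := by
  induction n with
  | zero => simp
  | succ n ih => rw [List.replicate_succ, List.flatten_cons, ih]; simp

lemma G_vanish {S : Set A}
    (hS1 : ∀ y ∈ S, Coalgebra.comul (R := k) y = y ⊗ₜ[k] 1 + 1 ⊗ₜ[k] y)
    (hS2 : ∀ y ∈ S, Coalgebra.counit (R := k) y = 0) :
    ∀ l : List A, (∀ z ∈ l, z ∈ S) → ∀ c : List (List A), l.length < ce c →
      G k c l.prod = 0 := by
  intro l
  induction l with
  | nil =>
      intro _ c hc
      rw [List.prod_nil, G_one]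
      simp only [List.length_nil] at hc
      have hpos : 0 < c.countP (·.isEmpty) := hc
      obtain ⟨b, hb, hbe⟩ := List.countP_pos_iff.mp hpos
      have hb0 : b = [] := by simpa using hbe
      have hzero : rr k A b.prod = 0 := by
        subst hb0; simpa using rr_one (k := k) (A := A)
      exact List.prod_eq_zero (List.mem_map.mpr ⟨b, hb, hzero⟩)
  | cons y w ih =>
      intro hl c hc
      have hy : y ∈ S := hl y (by simp)
      have happ := congrArg (fun f : A →ₗ[k] A => f w.prod)
        (G_comp_mulLeft (hS1 y hy) (hS2 y hy) c)
      simp only [LinearMap.comp_apply, LinearMap.mulLeft_apply] at happ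
      rw [List.prod_cons, happ, list_sum_apply, List.map_map]
      apply List.sum_eq_zero
      intro x hx
      simp only [List.mem_map, Function.comp] at hx
      obtain ⟨c', hc', rfl⟩ := hx
      refine ih (fun z hz => hl z (by simp [hz])) c' ?_
      have := ce_le_ins (y := y) hc'
      simp only [List.length_cons] at hc
      omega

lemma G_exact {S : Set A}
    (hS1 : ∀ y ∈ S, Coalgebra.comul (R := k) y = y ⊗ₜ[k] 1 + 1 ⊗ₜ[k] y)
    (hS2 : ∀ y ∈ S, Coalgebra.counit (R := k) y = 0)
    (hcomm : ∀ x ∈ S, ∀ y ∈ S, x * y - y * x ∈ Submodule.span k S) :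
    ∀ l : List A, (∀ z ∈ l, z ∈ S) → ∀ c : List (List A),
      (∀ b ∈ c, ∀ z ∈ b, z ∈ S) → ce c = l.length →
      G k c l.prod - Nat.factorial l.length • (c.flatten ++ l).prod
        ∈ Fil k S ((c.flatten ++ l).length - 1) := by
  intro l
  induction l with
  | nil =>
      intro _ c hc hce
      have hne : ∀ b ∈ c, rr k A b.prod = b.prod := by
        intro b hb
        have hbne : b ≠ [] := by
          intro hb0
          have hpos : 0 < ce c := List.countP_pos_iff.mpr ⟨b, hb, by simp [hb0]⟩
          simp only [List.length_nil] at hce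
          omega
        exact rr_of_counit_eq_zero
          (counit_prod_eq_zero hbne (fun z hz => hS2 z (hc b hb z hz)))
      rw [List.prod_nil, G_one, List.append_nil]
      have hmap : (c.map (fun b => rr k A b.prod)).prod = (c.map List.prod).prod := by
        congr 1
        exact List.map_congr_left hne
      rw [hmap, ← List.prod_flatten]
      simp
  | cons y w ih =>
      intro hl c hc hce
      have hy : y ∈ S := hl y (by simp)
      have hw : ∀ z ∈ w, z ∈ S := fun z hz => hl z (by simp [hz])
      have happ := congrArg (fun f : A →ₗ[k] A => f w.prod)
        (G_comp_mulLeft (hS1 y hy) (hS2 y hy) c)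
      simp only [LinearMap.comp_apply, LinearMap.mulLeft_apply] at happ
      rw [List.prod_cons, happ, list_sum_apply, List.map_map]
      simp only [List.length_cons] at hce ⊢
      set N := (c.flatten ++ y :: w).length with hN
      set X := (c.flatten ++ y :: w).prod with hX
      have hsplit := sum_split (M := Fil k S (N - 1)) (Nat.factorial w.length • X) y c
        (fun c' => G k c' w.prod) ?_
      · have hcombine : ce c • Nat.factorial w.length • X = Nat.factorial (w.length + 1) • X := by
          rw [hce, smul_smul, Nat.factorial_succ]
        rw [hcombine] at hsplit
        exact hsplit
      · intro c' hc'
        have hperm := flatten_ins_perm hc'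
        have hlen' : c'.flatten.length = c.flatten.length + 1 := by
          rw [hperm.length_eq]; simp
        constructor
        · intro hcee
          exact G_vanish hS1 hS2 w hw c' (by omega)
        · intro hcee
          have hc'S : ∀ b ∈ c', ∀ z ∈ b, z ∈ S := by
            intro b hb z hz
            have := mem_of_mem_ins hc' hb hz
            rcases List.mem_append.mp this with h | h
            · obtain ⟨b0, hb0, hz0⟩ := List.mem_flatten.mp h
              exact hc b0 hb0 z hz0
            · simp only [List.mem_singleton] at h
              subst h; exact hy
          have hihyp := ih hw c' hc'S (by omega)
          have hNlen : (c'.flatten ++ w).length = N := by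
            simp only [hN, List.length_append, List.length_cons, hlen']
            omega
          rw [hNlen] at hihyp
          have hpp : (c'.flatten ++ w).Perm (c.flatten ++ y :: w) := by
            have h1 := hperm.append_right w
            have h2 : (c.flatten ++ [y]) ++ w = c.flatten ++ y :: w := by
              simp
            rwa [h2] at h1
          have hlet : ∀ z ∈ c'.flatten ++ w, z ∈ S := by
            intro z hz
            rcases List.mem_append.mp hz with h | h
            · obtain ⟨b0, hb0, hz0⟩ := List.mem_flatten.mp h
              exact hc'S b0 hb0 z hz0
            · exact hw z h
          have hpdiff := perm_prod_sub_mem hcomm hpp hlet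
          rw [hNlen] at hpdiff
          have hsm := Submodule.add_mem _ hihyp
            (nsmul_mem hpdiff (Nat.factorial w.length))
          rw [smul_sub] at hsm
          have : G k c' w.prod - Nat.factorial w.length • (c'.flatten ++ w).prod
              + (Nat.factorial w.length • (c'.flatten ++ w).prod - Nat.factorial w.length • X)
              = G k c' w.prod - Nat.factorial w.length • X := by abel
          rwa [this] at hsm

def Mset (S : Set A) (n : ℕ) : Set A :=
  {a | ∃ l : List A, (∀ z ∈ l, z ∈ S) ∧ l.length ≤ n ∧ l.prod = a}

lemma Fil_le_span_Mset (S : Set A) : ∀ n, Fil k S n ≤ Submodule.span k (Mset S n) := by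
  intro n
  induction n with
  | zero =>
      show (1 ⊔ Submodule.span k S) ^ 0 ≤ _
      rw [pow_zero, Submodule.one_eq_span]
      refine Submodule.span_le.mpr ?_
      rintro z hz
      rw [Set.mem_singleton_iff.mp hz]
      exact Submodule.subset_span ⟨[], by simp⟩
  | succ n ih =>
      show (1 ⊔ Submodule.span k S) ^ (n + 1) ≤ _
      rw [pow_succ]
      have hQ : (1 ⊔ Submodule.span k S : Submodule k A) ≤ Submodule.span k (Mset S 1) := by
        refine sup_le ?_ ?_
        · rw [Submodule.one_eq_span]
          refine Submodule.span_le.mpr ?_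
          rintro z hz
          rw [Set.mem_singleton_iff.mp hz]
          exact Submodule.subset_span ⟨[], by simp⟩
        · refine Submodule.span_mono ?_
          intro z hz
          exact ⟨[z], by simp [hz]⟩
      calc (1 ⊔ Submodule.span k S) ^ n * (1 ⊔ Submodule.span k S)
          ≤ Submodule.span k (Mset S n) * Submodule.span k (Mset S 1) :=
            mul_le_mul' ih hQ
        _ = Submodule.span k (Mset S n * Mset S 1) := Submodule.span_mul_span k _ _
        _ ≤ Submodule.span k (Mset S (n + 1)) := by
            refine Submodule.span_mono ?_
            rintro z hz
            rw [Set.mem_mul] at hz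
            obtain ⟨x, hx, y, hy, rfl⟩ := hz
            obtain ⟨l₁, hl₁, hlen₁, rfl⟩ := hx
            obtain ⟨l₂, hl₂, hlen₂, rfl⟩ := hy
            refine ⟨l₁ ++ l₂, ?_, ?_, ?_⟩
            · intro w hw
              rcases List.mem_append.mp hw with h | h
              · exact hl₁ w h
              · exact hl₂ w h
            · simp only [List.length_append]; omega
            · rw [List.prod_append]

lemma key_lemma {S : Set A}
    (hS1 : ∀ y ∈ S, Coalgebra.comul (R := k) y = y ⊗ₜ[k] 1 + 1 ⊗ₜ[k] y)
    (hS2 : ∀ y ∈ S, Coalgebra.counit (R := k) y = 0)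
    (hcomm : ∀ x ∈ S, ∀ y ∈ S, x * y - y * x ∈ Submodule.span k S)
    (n : ℕ) {a : A} (ha : a ∈ Fil k S (n + 1)) :
    G k (List.replicate (n + 1) []) a - Nat.factorial (n + 1) • a ∈ Fil k S n := by
  have hsp := Fil_le_span_Mset S (n + 1) ha
  refine Submodule.span_induction ?_ ?_ ?_ ?_ hsp
  · rintro x ⟨l, hl, hlen, rfl⟩
    rcases Nat.lt_or_ge l.length (n + 1) with hlt | hge
    · rw [G_vanish hS1 hS2 l hl _ (by rw [ce_replicate]; omega), zero_sub]
      refine neg_mem (nsmul_mem ?_ _)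
      exact Fil_mono S (by omega : l.length ≤ n) (prod_mem_Fil l hl)
    · have hlen' : l.length = n + 1 := by omega
      have := G_exact hS1 hS2 hcomm l hl (List.replicate (n + 1) [])
        (fun b hb z hz => by
          rw [List.eq_of_mem_replicate hb] at hz
          simp at hz)
        (by rw [ce_replicate, hlen'])
      rw [flatten_replicate_nil, List.nil_append, hlen'] at this
      simpa using this
  · simp
  · intro x y _ _ hx hy
    have := Submodule.add_mem _ hx hy
    rw [map_add, smul_add]
    convert this using 1
    abel
  · intro r x _ hx
    have := (Fil k S n).smul_mem r hx
    rw [map_smul, smul_comm (Nat.factorial (n + 1)) r x]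
    rw [smul_sub] at this
    exact this

lemma G_replicate_prim {a : A}
    (ha : Coalgebra.comul (R := k) a = a ⊗ₜ[k] 1 + 1 ⊗ₜ[k] a)
    (n : ℕ) (hn : 1 ≤ n) :
    G k (List.replicate (n + 1) ([] : List A)) a = 0 := by
  rw [List.replicate_succ]
  show cv (rr k A ∘ₗ LinearMap.mulLeft k ([] : List A).prod)
    (G k (List.replicate n [])) a = 0
  have h1 : rr k A ∘ₗ LinearMap.mulLeft k ([] : List A).prod = rr k A := by
    rw [List.prod_nil, LinearMap.mulLeft_one, LinearMap.comp_id]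
  rw [h1, cv_prim _ _ ha]
  have hg1 : G k (List.replicate n ([] : List A)) 1 = 0 := by
    have := G_vanish (k := k) (S := (∅ : Set A)) (by simp) (by simp) [] (by simp)
      (List.replicate n ([] : List A)) (by rw [ce_replicate]; simp; omega)
    simpa using this
  rw [hg1, rr_one]
  simp

end UEAux


open UEAux

attribute [local instance 100] LieRing.ofAssociativeRing

/-- Let `k` be a field of characteristic zero and `L` a Lie algebra over `k`.
The universal enveloping algebra `U(L)` is characterized by its universal property (`huniv`),
and its bialgebra structure is the one making the elements of `L` primitive (`hprim`).
Then the set of primitive elements of `U(L)` (elements `a` with `Δ a = a ⊗ 1 + 1 ⊗ a`) is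
exactly the image of `L` under the canonical map `φ : L → U(L)`. -/
theorem primitives_of_universalEnveloping_eq_range
    (k : Type u) [Field k] [CharZero k]
    (L : Type u) [LieRing L] [LieAlgebra k L]
    (A : Type u) [Ring A] [Bialgebra k A] (φ : L →ₗ⁅k⁆ A)
    -- `(A, φ)` is the universal enveloping algebra of `L`:
    (huniv : ∀ (B : Type u) [Ring B] [Algebra k B] (f : L →ₗ⁅k⁆ B),
      ∃! g : A →ₐ[k] B, ∀ x : L, g (φ x) = f x)
    -- the comultiplication is the one for which elements of `L` are primitive:
    (hprim : ∀ x : L,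
      Coalgebra.comul (R := k) (φ x) = (φ x) ⊗ₜ[k] 1 + 1 ⊗ₜ[k] (φ x)) :
    {a : A | Coalgebra.comul (R := k) a = a ⊗ₜ[k] 1 + 1 ⊗ₜ[k] a} = Set.range φ := by
  classical
  ext a
  simp only [Set.mem_setOf_eq]
  constructor
  swap
  · rintro ⟨x, rfl⟩
    exact hprim x
  intro ha
  by_cases h1 : (1 : A) = 0
  · haveI : Subsingleton A := subsingleton_of_zero_eq_one h1.symm
    exact ⟨0, Subsingleton.elim _ _⟩
  set S : Set A := Set.range ⇑φ with hSdef
  have hS1 : ∀ y ∈ S, Coalgebra.comul (R := k) y = y ⊗ₜ[k] 1 + 1 ⊗ₜ[k] y := by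
    rintro y ⟨x, rfl⟩; exact hprim x
  have hS2 : ∀ y ∈ S, Coalgebra.counit (R := k) y = 0 := by
    rintro _ ⟨x, rfl⟩
    have h := Coalgebra.rTensor_counit_comul (R := k) (φ x)
    rw [hprim x, map_add, LinearMap.rTensor_tmul, LinearMap.rTensor_tmul,
      Bialgebra.counit_one] at h
    have h0 : (Coalgebra.counit (R := k) (φ x)) ⊗ₜ[k] (1 : A) = 0 := by
      have h' : (Coalgebra.counit (R := k) (φ x)) ⊗ₜ[k] (1 : A) + (1 : k) ⊗ₜ[k] φ x
          = 0 + (1 : k) ⊗ₜ[k] φ x := by rw [zero_add]; exact h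
      exact add_right_cancel h'
    have h2 := congrArg (TensorProduct.lid k A) h0
    rw [map_zero, TensorProduct.lid_tmul] at h2
    by_contra hc
    exact h1 (by
      have := congrArg (fun w => (Coalgebra.counit (R := k) (φ x))⁻¹ • w) h2
      simpa [smul_smul, inv_mul_cancel₀ hc] using this)
  have hcomm : ∀ x ∈ S, ∀ y ∈ S, x * y - y * x ∈ Submodule.span k S := by
    rintro _ ⟨u, rfl⟩ _ ⟨v, rfl⟩
    have he : φ u * φ v - φ v * φ u = φ ⁅u, v⁆ := by
      rw [LieHom.map_lie, Ring.lie_def]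
    rw [he]
    exact Submodule.subset_span ⟨⁅u, v⁆, rfl⟩
  -- generation: A is generated by the image of φ
  have hadj : ∀ b : A, b ∈ Algebra.adjoin k S := by
    set S' : Subalgebra k A := Algebra.adjoin k S with hS'
    let ψ : L →ₗ[k] S' :=
      (φ.toLinearMap).codRestrict (Subalgebra.toSubmodule S')
        (fun x => Algebra.subset_adjoin ⟨x, rfl⟩)
    let φ' : L →ₗ⁅k⁆ S' :=
      { toLinearMap := ψ
        map_lie' := by
          intro x y
          apply Subtype.ext
          show φ ⁅x, y⁆ = _
          rw [LieHom.map_lie, Ring.lie_def, Ring.lie_def]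
          push_cast
          rfl }
    obtain ⟨g, hg, -⟩ := huniv S' φ'
    obtain ⟨g₀, hg₀, huniq⟩ := huniv A φ
    have e1 : S'.val.comp g = g₀ := huniq _ (fun x => by
      have : g (φ x) = φ' x := hg x
      simp only [AlgHom.comp_apply, this]
      rfl)
    have e2 : AlgHom.id k A = g₀ := huniq _ (fun x => rfl)
    intro b
    have hb : S'.val (g b) = b := by
      rw [show S'.val (g b) = (S'.val.comp g) b from rfl, e1, ← e2]
      rfl
    have := (g b).2
    rwa [show ((g b : A)) = b from hb] at this
  -- a lies in some filtration step
  have hFn : ∃ n, a ∈ Fil k S n := by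
    have h0 : a ∈ Submodule.span k (Submonoid.closure S : Set A) := by
      rw [← Algebra.adjoin_eq_span]
      exact hadj a
    refine Submodule.span_induction ?_ ?_ ?_ ?_ h0
    · intro x hx
      obtain ⟨l, hl, rfl⟩ := Submonoid.exists_list_of_mem_closure hx
      exact ⟨l.length, prod_mem_Fil l hl⟩
    · exact ⟨0, zero_mem _⟩
    · rintro x y _ _ ⟨n, hn⟩ ⟨m, hm⟩
      exact ⟨max n m, Submodule.add_mem _ (Fil_mono S (le_max_left n m) hn)
        (Fil_mono S (le_max_right n m) hm)⟩
    · rintro r x _ ⟨n, hn⟩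
      exact ⟨n, Submodule.smul_mem _ r hn⟩
  obtain ⟨n, hn⟩ := hFn
  -- descent to filtration degree 1
  have hdesc : ∀ m, a ∈ Fil k S (m + 1) → a ∈ Fil k S 1 := by
    intro m
    induction m with
    | zero => exact id
    | succ m ih =>
        intro hm
        have hk := key_lemma hS1 hS2 hcomm (m + 1) hm
        rw [G_replicate_prim ha (m + 1) (by omega), zero_sub] at hk
        have h2 := neg_mem hk
        rw [neg_neg] at h2
        have h3 : ((Nat.factorial (m + 2) : ℕ) : k) • a ∈ Fil k S (m + 1) := by
          rwa [Nat.cast_smul_eq_nsmul]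
        have hne : ((Nat.factorial (m + 2) : ℕ) : k) ≠ 0 :=
          Nat.cast_ne_zero.mpr (Nat.factorial_ne_zero _)
        have h4 := Submodule.smul_mem _ (((Nat.factorial (m + 2) : ℕ) : k))⁻¹ h3
        rw [inv_smul_smul₀ hne] at h4
        exact ih h4
  have ha1 : a ∈ Fil k S 1 := by
    cases n with
    | zero => exact Fil_mono S (by omega) hn
    | succ n => exact hdesc n hn
  -- analyze degree-one part
  have ha1' : a ∈ (1 : Submodule k A) ⊔ Submodule.span k S := by
    have : Fil k S 1 = (1 : Submodule k A) ⊔ Submodule.span k S := pow_one _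
    rwa [this] at ha1
  rw [Submodule.mem_sup] at ha1'
  obtain ⟨z, hz, p, hp, hzp⟩ := ha1'
  obtain ⟨c, rfl⟩ := Submodule.mem_one.mp hz
  have hspan_eq : Submodule.span k S = LinearMap.range φ.toLinearMap := by
    rw [hSdef, show Set.range ⇑φ = ↑(LinearMap.range φ.toLinearMap) from by
      rw [LinearMap.coe_range, LieHom.coe_toLinearMap]]
    exact Submodule.span_eq _
  rw [hspan_eq] at hp
  obtain ⟨x, rfl⟩ := hp
  have hφx : φ.toLinearMap x = φ x := rfl
  rw [hφx] at hzp
  -- show the scalar part vanishes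
  have hzprim : Coalgebra.comul (R := k) (algebraMap k A c)
      = (algebraMap k A c) ⊗ₜ[k] 1 + 1 ⊗ₜ[k] (algebraMap k A c) := by
    have hz_eq : algebraMap k A c = a - φ x := by rw [← hzp]; abel
    rw [hz_eq, map_sub, ha, hprim x, TensorProduct.sub_tmul, TensorProduct.tmul_sub]
    abel
  have hzero : algebraMap k A c = 0 := by
    have he1 : Coalgebra.comul (R := k) (algebraMap k A c) = c • ((1 : A) ⊗ₜ[k] (1 : A)) := by
      rw [Algebra.algebraMap_eq_smul_one, map_smul, Bialgebra.comul_one,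
        Algebra.TensorProduct.one_def]
    have he2 : (algebraMap k A c) ⊗ₜ[k] (1 : A) + (1 : A) ⊗ₜ[k] (algebraMap k A c)
        = c • ((1 : A) ⊗ₜ[k] (1 : A)) + c • ((1 : A) ⊗ₜ[k] (1 : A)) := by
      rw [Algebra.algebraMap_eq_smul_one, TensorProduct.smul_tmul', TensorProduct.tmul_smul]
      simp [TensorProduct.smul_tmul']
    have he3 : c • ((1 : A) ⊗ₜ[k] (1 : A)) = 0 := by
      have h := hzprim
      rw [he1, he2] at h
      have h' : c • ((1 : A) ⊗ₜ[k] (1 : A)) + 0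
          = c • ((1 : A) ⊗ₜ[k] (1 : A)) + c • ((1 : A) ⊗ₜ[k] (1 : A)) := by
        rw [add_zero]; exact h
      exact ((add_left_cancel h').symm : _)
    have h5 := congrArg (LinearMap.mul' k A) he3
    rw [map_smul, LinearMap.mul'_apply, mul_one, map_zero] at h5
    rw [Algebra.algebraMap_eq_smul_one]
    exact h5
  exact ⟨x, by rw [← hzp, hzero, zero_add]⟩
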